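/- arXiv:2003.04660 — 3 statements merged into one kernel-verified Lean document; each statement's English description precedes it below -/
import Mathlib

section
/- Let S, P_A, P_B be unital complex algebras, let ω be a linear functional on S and σ_A, σ_B linear functionals on P_A, P_B, and let Θ_A, Θ_B be unital algebra automorphisms of S⊗P_A and S⊗P_B respectively. With Θ̂_A, Θ̂_B the extensions of Θ_A, Θ_B to automorphisms of S⊗P_A⊗P_B (Θ̂_A acting on the first and second tensor factors, Θ̂_B on the first and third) and ε_B(O) := (id_S⊗σ_B)(Θ_B(1⊗O)), the following identity holds for all O_A ∈ P_A and O_B ∈ P_B: (ω⊗σ_A⊗σ_B)((Θ̂_A ∘ Θ̂_B)(1⊗O_A⊗O_B)) = (ω⊗σ_A)(Θ_A(ε_B(O_B)⊗O_A)). -/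
open scoped TensorProduct

noncomputable section

variable {S PA PB : Type*} [Ring S] [Algebra ℂ S]
  [Ring PA] [Algebra ℂ PA] [Ring PB] [Algebra ℂ PB]

/-- The tensor product `ω ⊗ σ` of two linear functionals, determined by
`(ω ⊗ σ)(a ⊗ b) = ω a * σ b`. -/
def tensorFunctional {A B : Type*} [Ring A] [Algebra ℂ A]
    [Ring B] [Algebra ℂ B] (ω : A →ₗ[ℂ] ℂ) (σ : B →ₗ[ℂ] ℂ) :
    A ⊗[ℂ] B →ₗ[ℂ] ℂ :=
  (TensorProduct.lid ℂ ℂ).toLinearMap.comp (TensorProduct.map ω σ)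

/-- The partial trace `id_S ⊗ σ : S ⊗ P →ₗ S`, determined by `a ⊗ b ↦ σ(b) • a`. -/
def idTensorFunctional (S : Type*) [Ring S] [Algebra ℂ S] {P : Type*}
    [Ring P] [Algebra ℂ P] (σ : P →ₗ[ℂ] ℂ) : S ⊗[ℂ] P →ₗ[ℂ] S :=
  (TensorProduct.rid ℂ S).toLinearMap.comp (TensorProduct.map LinearMap.id σ)

/-- The rearrangement isomorphism `(S ⊗ P_A) ⊗ P_B ≃ (S ⊗ P_B) ⊗ P_A`
exchanging the two probe factors. -/
def probeSwap (S PA PB : Type*) [Ring S] [Algebra ℂ S]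
    [Ring PA] [Algebra ℂ PA] [Ring PB] [Algebra ℂ PB] :
    ((S ⊗[ℂ] PA) ⊗[ℂ] PB) ≃ₐ[ℂ] ((S ⊗[ℂ] PB) ⊗[ℂ] PA) :=
  (Algebra.TensorProduct.assoc ℂ ℂ ℂ S PA PB).trans
    ((Algebra.TensorProduct.congr AlgEquiv.refl
        (Algebra.TensorProduct.comm ℂ PA PB)).trans
      (Algebra.TensorProduct.assoc ℂ ℂ ℂ S PB PA).symm)

/-- The extension `Θ̂_A` of an automorphism `Θ_A` of `S ⊗ P_A` to
`(S ⊗ P_A) ⊗ P_B`, acting trivially on `P_B`. -/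
def hatA (ΘA : (S ⊗[ℂ] PA) ≃ₐ[ℂ] (S ⊗[ℂ] PA)) :
    ((S ⊗[ℂ] PA) ⊗[ℂ] PB) ≃ₐ[ℂ] ((S ⊗[ℂ] PA) ⊗[ℂ] PB) :=
  Algebra.TensorProduct.congr ΘA AlgEquiv.refl

/-- The extension `Θ̂_B` of an automorphism `Θ_B` of `S ⊗ P_B` to
`(S ⊗ P_A) ⊗ P_B`, acting on the first and third tensor factors and trivially
on `P_A`. -/
def hatB (ΘB : (S ⊗[ℂ] PB) ≃ₐ[ℂ] (S ⊗[ℂ] PB)) :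
    ((S ⊗[ℂ] PA) ⊗[ℂ] PB) ≃ₐ[ℂ] ((S ⊗[ℂ] PA) ⊗[ℂ] PB) :=
  (probeSwap S PA PB).trans ((Algebra.TensorProduct.congr ΘB AlgEquiv.refl).trans
    (probeSwap S PA PB).symm)

/-- The induced system observable `ε(O) = (id_S ⊗ σ)(Θ (1 ⊗ O))` of a probe
observable `O`. -/
def inducedObservable {P : Type*} [Ring P] [Algebra ℂ P] (σ : P →ₗ[ℂ] ℂ)
    (Θ : (S ⊗[ℂ] P) ≃ₐ[ℂ] (S ⊗[ℂ] P)) (O : P) : S :=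
  idTensorFunctional S σ (Θ ((1 : S) ⊗ₜ[ℂ] O))

/-- Equation (20) of the paper: for probes `A` and `B` of a system `S`,
`(ω ⊗ σ_A ⊗ σ_B)((Θ̂_A ∘ Θ̂_B)(1 ⊗ O_A ⊗ O_B)) = (ω ⊗ σ_A)(Θ_A (ε_B(O_B) ⊗ O_A))`,
where `ε_B(O_B)` is the induced system observable of `O_B`. -/
theorem hatA_hatB_expectation
    (ω : S →ₗ[ℂ] ℂ) (σA : PA →ₗ[ℂ] ℂ) (σB : PB →ₗ[ℂ] ℂ)
    (ΘA : (S ⊗[ℂ] PA) ≃ₐ[ℂ] (S ⊗[ℂ] PA)) (ΘB : (S ⊗[ℂ] PB) ≃ₐ[ℂ] (S ⊗[ℂ] PB))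
    (OA : PA) (OB : PB) :
    tensorFunctional (tensorFunctional ω σA) σB
      ((hatA ΘA) ((hatB ΘB) (((1 : S) ⊗ₜ[ℂ] OA) ⊗ₜ[ℂ] OB)))
    = tensorFunctional ω σA (ΘA (inducedObservable σB ΘB OB ⊗ₜ[ℂ] OA)) := by
  have key : ∀ x : S ⊗[ℂ] PB,
      tensorFunctional (tensorFunctional ω σA) σB
        ((hatA ΘA) ((probeSwap S PA PB).symm (x ⊗ₜ[ℂ] OA)))
      = tensorFunctional ω σA (ΘA ((idTensorFunctional S σB x) ⊗ₜ[ℂ] OA)) := by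
    intro x
    induction x using TensorProduct.induction_on with
    | zero =>
        simp [TensorProduct.zero_tmul, idTensorFunctional]
    | tmul s b =>
        have h : (idTensorFunctional S σB) (s ⊗ₜ[ℂ] b) = σB b • s := by
          simp [idTensorFunctional]
        rw [h, show ((σB b • s) ⊗ₜ[ℂ] OA : S ⊗[ℂ] PA) = σB b • (s ⊗ₜ[ℂ] OA) from
          (TensorProduct.smul_tmul' _ _ _).symm]
        simp [probeSwap, hatA, tensorFunctional, idTensorFunctional, mul_comm]
    | add x y hx hy =>
        simp only [TensorProduct.add_tmul, map_add, hx, hy]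
  have hhatB : (hatB ΘB) (((1 : S) ⊗ₜ[ℂ] OA) ⊗ₜ[ℂ] OB)
      = (probeSwap S PA PB).symm ((ΘB ((1:S) ⊗ₜ[ℂ] OB)) ⊗ₜ[ℂ] OA) := by
    simp [hatB, probeSwap]
  rw [hhatB, key, inducedObservable]

end
end

section
/- Let S, P_A, P_B be unital complex algebras, let ω be a linear functional on S and σ_A, σ_B linear functionals on P_A, P_B with σ_A(1) = 1, and let Θ_A, Θ_B be unital algebra automorphisms of S⊗P_A and S⊗P_B. With Θ̂_A, Θ̂_B the extensions to S⊗P_A⊗P_B (Θ̂_A acting on factors one and two, Θ̂_B on factors one and three), ε_B(O) := (id_S⊗σ_B)(Θ_B(1⊗O)), and J_A(ω)(C) := (ω⊗σ_A)(Θ_A(C⊗1)), one has for every O_B ∈ P_B: (ω⊗σ_A⊗σ_B)((Θ̂_A ∘ Θ̂_B)(1⊗1⊗O_B)) = J_A(ω)(ε_B(O_B)). That is, when observer A's coupling precedes observer B's, B's expected outcome equals the expected value of B's induced observable in the non-selectively updated state J_A(ω). -/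
open scoped TensorProduct

noncomputable section

variable {S PA PB : Type*} [Ring S] [Algebra ℂ S]
  [Ring PA] [Algebra ℂ PA] [Ring PB] [Algebra ℂ PB]

/-- The non-selective state-update map `J_A(ω) : C ↦ (ω ⊗ σ_A)(Θ_A (C ⊗ 1))`. -/
def updateMap {P : Type*} [Ring P] [Algebra ℂ P] (σ : P →ₗ[ℂ] ℂ)
    (Θ : (S ⊗[ℂ] P) ≃ₐ[ℂ] (S ⊗[ℂ] P)) (ω : S →ₗ[ℂ] ℂ) : S →ₗ[ℂ] ℂ :=
  (tensorFunctional ω σ).comp (Θ.toLinearMap.comp ((TensorProduct.mk ℂ S P).flip (1 : P)))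

/-- When observer `A`'s coupling precedes observer `B`'s, `B`'s expected
outcome equals the expectation of `B`'s induced observable `ε_B(O_B)` in the
non-selectively updated state `J_A(ω)`:
`(ω ⊗ σ_A ⊗ σ_B)((Θ̂_A ∘ Θ̂_B)(1 ⊗ 1 ⊗ O_B)) = J_A(ω)(ε_B(O_B))`. -/
theorem ordered_measurement_expectation_eq_update
    (ω : S →ₗ[ℂ] ℂ) (σA : PA →ₗ[ℂ] ℂ) (σB : PB →ₗ[ℂ] ℂ) (hσA : σA 1 = 1)
    (ΘA : (S ⊗[ℂ] PA) ≃ₐ[ℂ] (S ⊗[ℂ] PA)) (ΘB : (S ⊗[ℂ] PB) ≃ₐ[ℂ] (S ⊗[ℂ] PB))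
    (OB : PB) :
    tensorFunctional (tensorFunctional ω σA) σB
      ((hatA ΘA) ((hatB ΘB) (((1 : S) ⊗ₜ[ℂ] (1 : PA)) ⊗ₜ[ℂ] OB)))
    = updateMap σA ΘA ω (inducedObservable σB ΘB OB) := by
  have h1 : (hatB (PA := PA) ΘB) (((1 : S) ⊗ₜ[ℂ] (1 : PA)) ⊗ₜ[ℂ] OB)
      = (probeSwap S PA PB).symm ((ΘB ((1 : S) ⊗ₜ[ℂ] OB)) ⊗ₜ[ℂ] (1 : PA)) := by
    simp [hatB, probeSwap, Algebra.TensorProduct.congr,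
      Algebra.TensorProduct.assoc_tmul, Algebra.TensorProduct.assoc_symm_tmul]
  rw [h1, inducedObservable]
  generalize (ΘB ((1 : S) ⊗ₜ[ℂ] OB)) = x
  induction x using TensorProduct.induction_on with
  | zero => simp [updateMap, tensorFunctional, idTensorFunctional]
  | tmul a b =>
      simp [updateMap, tensorFunctional, idTensorFunctional, probeSwap, hatA,
        Algebra.TensorProduct.congr, mul_comm]
  | add x y hx hy =>
      simp only [map_add, TensorProduct.add_tmul, hx, hy]

end
end

section
/- Let S, P_A, P_B be unital complex algebras, let ω be a linear functional on S and σ_A, σ_B linear functionals on P_A, P_B with σ_A(1) = 1, and let Θ_A, Θ_B be unital algebra automorphisms of S⊗P_A and S⊗P_B. Order the tensor product as S⊗P_B⊗P_A, let Θ̂_B := Θ_B⊗id_{P_A} act on the first two factors and let Θ̂_A act as Θ_A on the first and third factors and as the identity on P_B. Then for every O_B ∈ P_B: (ω⊗σ_B⊗σ_A)((Θ̂_B ∘ Θ̂_A)(1⊗O_B⊗1)) = ω(ε_B(O_B)), where ε_B(O) := (id_S⊗σ_B)(Θ_B(1⊗O)). That is, a measurement coupled only after B's measurement does not influence B's expected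 outcome: there is no influence from the future to the past. -/
open scoped TensorProduct

noncomputable section

variable {S PA PB : Type*} [Ring S] [Algebra ℂ S]
  [Ring PA] [Algebra ℂ PA] [Ring PB] [Algebra ℂ PB]

/-- No influence from the future to the past: with the tensor product ordered
as `S ⊗ P_B ⊗ P_A`, where `Θ̂_B = Θ_B ⊗ id` acts on the first two factors and
`Θ̂_A` acts on the first and third factors, a measurement coupled only after
`B`'s measurement does not influence `B`'s expected outcome:
`(ω ⊗ σ_B ⊗ σ_A)((Θ̂_B ∘ Θ̂_A)(1 ⊗ O_B ⊗ 1)) = ω(ε_B(O_B))`. -/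
theorem no_influence_from_future
    (ω : S →ₗ[ℂ] ℂ) (σA : PA →ₗ[ℂ] ℂ) (σB : PB →ₗ[ℂ] ℂ) (hσA : σA 1 = 1)
    (ΘA : (S ⊗[ℂ] PA) ≃ₐ[ℂ] (S ⊗[ℂ] PA)) (ΘB : (S ⊗[ℂ] PB) ≃ₐ[ℂ] (S ⊗[ℂ] PB))
    (OB : PB) :
    tensorFunctional (tensorFunctional ω σB) σA
      ((hatA ΘB) ((hatB (PA := PB) ΘA) (((1 : S) ⊗ₜ[ℂ] OB) ⊗ₜ[ℂ] (1 : PA))))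
    = ω (inducedObservable σB ΘB OB) := by
  have key : (hatB (PA := PB) ΘA) (((1:S) ⊗ₜ[ℂ] OB) ⊗ₜ[ℂ] (1:PA))
      = ((1:S) ⊗ₜ[ℂ] OB) ⊗ₜ[ℂ] (1:PA) := by
    have hΘA1 : ΘA ((1:S) ⊗ₜ[ℂ] (1:PA)) = (1:S) ⊗ₜ[ℂ] (1:PA) := by
      rw [← Algebra.TensorProduct.one_def, map_one, Algebra.TensorProduct.one_def]
    simp [hatB, hΘA1, probeSwap, AlgEquiv.trans_apply, Algebra.TensorProduct.assoc_tmul,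
      Algebra.TensorProduct.comm_tmul, Algebra.TensorProduct.congr_apply,
      Algebra.TensorProduct.congr_symm_apply, Algebra.TensorProduct.map_tmul]
  rw [key]
  rw [show ((1:S) ⊗ₜ[ℂ] OB) ⊗ₜ[ℂ] (1:PA) = ((1:S) ⊗ₜ[ℂ] OB) ⊗ₜ[ℂ] (1:PA) from rfl]
  simp only [hatA, Algebra.TensorProduct.congr_apply]
  -- reduce both sides via induction on ΘB (1 ⊗ OB)
  have : ∀ x : S ⊗[ℂ] PB,
      tensorFunctional (tensorFunctional ω σB) σA
        ((Algebra.TensorProduct.map ΘB.toAlgHom (AlgHom.id ℂ PA)) (x ⊗ₜ[ℂ] (1:PA)))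
      = ω (idTensorFunctional S σB (ΘB x)) := by
    intro x
    have : ∀ y : S ⊗[ℂ] PB,
        tensorFunctional (tensorFunctional ω σB) σA (y ⊗ₜ[ℂ] (1:PA))
        = ω (idTensorFunctional S σB y) := by
      intro y
      induction y using TensorProduct.induction_on with
      | zero => simp [tensorFunctional, idTensorFunctional]
      | tmul a b =>
          simp [tensorFunctional, idTensorFunctional, hσA, TensorProduct.smul_tmul',
            mul_comm]
      | add u v hu hv =>
          simp only [TensorProduct.add_tmul, map_add, hu, hv]
    simpa [Algebra.TensorProduct.map_tmul] using this (ΘB x)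
  simpa [inducedObservable] using this ((1:S) ⊗ₜ[ℂ] OB)

end
end
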